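/- Weighted-norm variance bound. Let φ∈Ψ and δ>0 with k(δ) ≤ m−1, where k(δ) is the largest k≤m with λ_k^{−1}≥δ² (convention λ_k^{−1}=+∞ when λ_k=0, and k(δ)=0 if λ₁^{−1}<δ²). Let (X,X',Y) be a random triple with X,X' independent uniform on V and Y∈{−1,1}. Then E‖Y·𝒫_L(E_{X,X'})‖_w² ≤ (4c+8)·m^{−1}·δ²·φ(k(δ)+1). -/

import Mathlib

open MeasureTheory ProbabilityTheory Matrix
open scoped Classical BigOperators

noncomputable section

variable {m : ℕ}

/-- uniform distribution on `Fin m` -/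
def uniformFin (m : ℕ) : Measure (Fin m) := ((m : ENNReal))⁻¹ • Measure.count

/-- squared norm of the orthogonal projection of `x` onto `L` -/
def projNormSq (L : Submodule ℝ (EuclideanSpace ℝ (Fin m)))
    (x : EuclideanSpace ℝ (Fin m)) : ℝ :=
  ‖(L.orthogonalProjectionOnto x : EuclideanSpace ℝ (Fin m))‖ ^ 2

/-- the matrix of the orthogonal projection onto `L` -/
def projMatrix (L : Submodule ℝ (EuclideanSpace ℝ (Fin m))) : Matrix (Fin m) (Fin m) ℝ :=
  Matrix.toEuclideanLin.symm (L.subtype ∘ₗ (L.orthogonalProjectionOnto).toLinearMap)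

/-- `𝒫_L(A) = A − P_{L⊥} A P_{L⊥}` -/
def calP (L : Submodule ℝ (EuclideanSpace ℝ (Fin m))) (A : Matrix (Fin m) (Fin m) ℝ) :
    Matrix (Fin m) (Fin m) ℝ :=
  A - projMatrix Lᗮ * A * projMatrix Lᗮ

/-- the symmetrized elementary matrix `E_{u,v} = ½(e_u ⊗ e_v + e_v ⊗ e_u)` -/
def Ematrix (u v : Fin m) : Matrix (Fin m) (Fin m) ℝ :=
  (1 / 2 : ℝ) • (Matrix.single u v 1 + Matrix.single v u 1)

/-- the coefficient `⟨A, φ_k ⊗ φ_j⟩` of `A` in the orthonormal basis `φ_k ⊗ φ_j` -/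
def pairCoef (A : Matrix (Fin m) (Fin m) ℝ) (x y : EuclideanSpace ℝ (Fin m)) : ℝ :=
  inner ℝ x (Matrix.toEuclideanLin A y)

/-- `k(δ)`: the largest `k ≤ m` with `λ_k⁻¹ ≥ δ²` (with the convention `λ_k⁻¹ = +∞` when
`λ_k = 0`), and `k(δ) = 0` if there is no such `k`. -/
def kDelta (m : ℕ) (lam : ℕ → ℝ) (δ : ℝ) : ℕ :=
  Finset.sup ((Finset.Icc 1 m).filter (fun k => lam k = 0 ∨ δ ^ 2 ≤ (lam k)⁻¹)) id

/-- the truncated weight `λ_k⁻¹ ∧ δ²` (`= δ²` when `λ_k = 0`) -/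
def wCoef (lam : ℕ → ℝ) (δ : ℝ) (k : ℕ) : ℝ :=
  if lam k = 0 then δ ^ 2 else min (lam k)⁻¹ (δ ^ 2)

/-- the squared weighted norm `‖A‖_w² = ∑_{k,j} (λ_k⁻¹ ∧ δ²)|⟨A,φ_k⊗φ_j⟩|²` -/
def wNormSq (m : ℕ) (lam : ℕ → ℝ) (δ : ℝ) (phi : ℕ → EuclideanSpace ℝ (Fin m))
    (A : Matrix (Fin m) (Fin m) ℝ) : ℝ :=
  ∑ k ∈ Finset.Icc 1 m, ∑ j ∈ Finset.Icc 1 m,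
    wCoef lam δ k * (pairCoef A (phi k) (phi j)) ^ 2

section Aux

variable {m : ℕ}

lemma pairCoef_Ematrix' (u v : Fin m) (a b : EuclideanSpace ℝ (Fin m)) :
    pairCoef (Ematrix u v) a b = (1/2) * (a u * b v + a v * b u) := by
  simp only [pairCoef, Ematrix, Matrix.toEuclideanLin_apply, PiLp.inner_apply, RCLike.inner_apply,
    Matrix.add_mulVec, Matrix.smul_mulVec, Matrix.mulVec, dotProduct,
    Matrix.single, ite_and, starRingEnd_apply, star_trivial, Matrix.of_apply,
    Pi.smul_apply, Pi.add_apply, 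
    smul_eq_mul, mul_add, Finset.sum_add_distrib, Finset.mul_sum]
  simp [Finset.sum_mul, Finset.sum_add_distrib, ite_mul, mul_ite, Finset.sum_ite_eq, Finset.sum_ite_eq']
  simp only [add_mul, Finset.sum_add_distrib, ite_mul, zero_mul, Finset.sum_ite_eq, Finset.mem_univ, if_true]
  ring

lemma pairCoef_smul' (y : ℝ) (A : Matrix (Fin m) (Fin m) ℝ) (x z : EuclideanSpace ℝ (Fin m)) :
    pairCoef (y • A) x z = y * pairCoef A x z := by
  simp [pairCoef, _root_.map_smul, inner_smul_right]

lemma toEuclideanLin_projMatrix' (L : Submodule ℝ (EuclideanSpace ℝ (Fin m)))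
    (x : EuclideanSpace ℝ (Fin m)) :
    Matrix.toEuclideanLin (projMatrix L) x
      = (L.orthogonalProjectionOnto x : EuclideanSpace ℝ (Fin m)) := by
  simp [projMatrix]

lemma pairCoef_calP' (L : Submodule ℝ (EuclideanSpace ℝ (Fin m))) (A : Matrix (Fin m) (Fin m) ℝ)
    (x y : EuclideanSpace ℝ (Fin m)) :
    pairCoef (calP L A) x y = pairCoef A x y
      - pairCoef A ((Lᗮ.orthogonalProjectionOnto x : EuclideanSpace ℝ (Fin m)))
          ((Lᗮ.orthogonalProjectionOnto y : EuclideanSpace ℝ (Fin m))) := by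
  have hmul : ∀ (M N : Matrix (Fin m) (Fin m) ℝ) (z : EuclideanSpace ℝ (Fin m)),
      Matrix.toEuclideanLin (M * N) z = Matrix.toEuclideanLin M (Matrix.toEuclideanLin N z) := by
    intro M N z
    rw [Matrix.toEuclideanLin_eq_toLin,
      Matrix.toLin_mul (PiLp.basisFun 2 ℝ (Fin m)) (PiLp.basisFun 2 ℝ (Fin m))]
    rfl
  simp only [pairCoef, calP, map_sub, LinearMap.sub_apply, inner_sub_right, hmul,
    toEuclideanLin_projMatrix']
  simp only [Submodule.coe_orthogonalProjectionOnto_apply]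
  rw [Submodule.inner_starProjection_left_eq_right]

lemma sum_sq_eNorm (a b : Fin m → ℝ) :
    ∑ u : Fin m, ∑ v : Fin m, ((1/2) * (a u * b v + a v * b u))^2
      ≤ (∑ u : Fin m, (a u)^2) * (∑ v : Fin m, (b v)^2) := by
  have expand : ∀ u v : Fin m, ((1/2) * (a u * b v + a v * b u))^2
      = (1/4) * ((a u)^2 * (b v)^2) + (1/2) * ((a u * b u) * (a v * b v))
        + (1/4) * ((a v)^2 * (b u)^2) := by intro u v; ring
  have h1 : ∑ u : Fin m, ∑ v : Fin m, ((1/2) * (a u * b v + a v * b u))^2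
      = (1/2) * ((∑ u : Fin m, (a u)^2) * (∑ v : Fin m, (b v)^2))
        + (1/2) * (∑ u : Fin m, a u * b u)^2 := by
    simp only [expand, Finset.sum_add_distrib, ← Finset.mul_sum, ← Finset.sum_mul]
    ring
  rw [h1]
  have hcs := Finset.sum_mul_sq_le_sq_mul_sq Finset.univ a b
  nlinarith [Finset.sum_nonneg (fun u (_ : u ∈ Finset.univ) => sq_nonneg (a u)),
    Finset.sum_nonneg (fun v (_ : v ∈ Finset.univ) => sq_nonneg (b v))]

lemma normsq_eq (x : EuclideanSpace ℝ (Fin m)) : ∑ i, (x i)^2 = ‖x‖^2 := by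
  rw [EuclideanSpace.norm_eq, Real.sq_sqrt (by positivity)]
  simp [Real.norm_eq_abs, sq_abs]

lemma proj_coe_norm_le (L : Submodule ℝ (EuclideanSpace ℝ (Fin m))) (x : EuclideanSpace ℝ (Fin m)) :
    ‖(L.orthogonalProjectionOnto x : EuclideanSpace ℝ (Fin m))‖ ≤ ‖x‖ := by
  rw [Submodule.norm_coe]
  calc ‖L.orthogonalProjectionOnto x‖ ≤ ‖L.orthogonalProjectionOnto‖ * ‖x‖ :=
        (L.orthogonalProjectionOnto).le_opNorm x
    _ ≤ 1 * ‖x‖ := by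
        exact mul_le_mul_of_nonneg_right (Submodule.orthogonalProjectionOnto_norm_le L) (norm_nonneg x)
    _ = ‖x‖ := one_mul _

lemma lemmaE (L : Submodule ℝ (EuclideanSpace ℝ (Fin m))) (x y : EuclideanSpace ℝ (Fin m))
    (hx : ‖x‖ = 1) (hy : ‖y‖ = 1) :
    ∑ u : Fin m, ∑ v : Fin m, (pairCoef (calP L (Ematrix u v)) x y)^2
      ≤ 2 * (projNormSq L x + projNormSq L y) := by
  set p : EuclideanSpace ℝ (Fin m) := (L.orthogonalProjectionOnto x : EuclideanSpace ℝ (Fin m)) with hp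
  set p' : EuclideanSpace ℝ (Fin m) := (L.orthogonalProjectionOnto y : EuclideanSpace ℝ (Fin m)) with hp'
  set q : EuclideanSpace ℝ (Fin m) := (Lᗮ.orthogonalProjectionOnto x : EuclideanSpace ℝ (Fin m)) with hq
  set q' : EuclideanSpace ℝ (Fin m) := (Lᗮ.orthogonalProjectionOnto y : EuclideanSpace ℝ (Fin m)) with hq'
  have hqx : ∀ u, q u = x u - p u := by
    intro u; rw [hq, Submodule.coe_orthogonalProjectionOnto_apply, Submodule.starProjection_orthogonal_val]; rfl
  have hqy : ∀ u, q' u = y u - p' u := by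
    intro u; rw [hq', Submodule.coe_orthogonalProjectionOnto_apply, Submodule.starProjection_orthogonal_val]; rfl
  have key : ∀ u v : Fin m, pairCoef (calP L (Ematrix u v)) x y
      = (1/2) * (p u * y v + p v * y u) + (1/2) * (q u * p' v + q v * p' u) := by
    intro u v
    rw [pairCoef_calP', pairCoef_Ematrix', pairCoef_Ematrix', ← hq, ← hq',
      hqx u, hqx v, hqy u, hqy v]
    ring
  have hbound : ∀ u v : Fin m, (pairCoef (calP L (Ematrix u v)) x y)^2
      ≤ 2 * ((1/2) * (p u * y v + p v * y u))^2 + 2 * ((1/2) * (q u * p' v + q v * p' u))^2 := by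
    intro u v; rw [key]
    nlinarith [sq_nonneg ((1/2) * (p u * y v + p v * y u) - (1/2) * (q u * p' v + q v * p' u))]
  calc ∑ u : Fin m, ∑ v : Fin m, (pairCoef (calP L (Ematrix u v)) x y)^2
      ≤ ∑ u : Fin m, ∑ v : Fin m, (2 * ((1/2) * (p u * y v + p v * y u))^2
          + 2 * ((1/2) * (q u * p' v + q v * p' u))^2) := by
        apply Finset.sum_le_sum; intro u _; apply Finset.sum_le_sum; intro v _; exact hbound u v
    _ = 2 * (∑ u : Fin m, ∑ v : Fin m, ((1/2) * (p u * y v + p v * y u))^2)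
          + 2 * (∑ u : Fin m, ∑ v : Fin m, ((1/2) * (q u * p' v + q v * p' u))^2) := by
        simp [Finset.sum_add_distrib, Finset.mul_sum]
    _ ≤ 2 * ((∑ u : Fin m, (p u)^2) * (∑ v : Fin m, (y v)^2))
          + 2 * ((∑ u : Fin m, (q u)^2) * (∑ v : Fin m, (p' v)^2)) := by
        have h1 := sum_sq_eNorm (fun u => p u) (fun v => y v)
        have h2 := sum_sq_eNorm (fun u => q u) (fun v => p' v)
        have := add_le_add (mul_le_mul_of_nonneg_left h1 (by norm_num : (0:ℝ) ≤ 2))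
          (mul_le_mul_of_nonneg_left h2 (by norm_num : (0:ℝ) ≤ 2))
        exact this
    _ ≤ 2 * (projNormSq L x + projNormSq L y) := by
        rw [normsq_eq, normsq_eq, normsq_eq, normsq_eq]
        have h1 : ‖p‖^2 ≤ 1 := by
          have := proj_coe_norm_le L x; rw [hx] at this; nlinarith [norm_nonneg p]
        have h2 : ‖q‖^2 ≤ 1 := by
          have := proj_coe_norm_le Lᗮ x; rw [hx] at this; nlinarith [norm_nonneg q]
        have hy2 : ‖y‖^2 = 1 := by rw [hy]; norm_num
        have hp2 : ‖p'‖^2 ≤ 1 := by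
          have := proj_coe_norm_le L y; rw [hy] at this; nlinarith [norm_nonneg p']
        simp only [projNormSq, ← hp, ← hp']
        nlinarith [sq_nonneg ‖p‖, sq_nonneg ‖p'‖, norm_nonneg p, norm_nonneg p']

lemma wNormSq_smul' (lam : ℕ → ℝ) (δ : ℝ) (phi : ℕ → EuclideanSpace ℝ (Fin m)) (y : ℝ)
    (A : Matrix (Fin m) (Fin m) ℝ) :
    wNormSq m lam δ phi (y • A) = y^2 * wNormSq m lam δ phi A := by
  unfold wNormSq
  rw [Finset.mul_sum]
  apply Finset.sum_congr rfl
  intro k _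
  rw [Finset.mul_sum]
  apply Finset.sum_congr rfl
  intro j _
  rw [pairCoef_smul', mul_pow]
  ring

lemma sum_comm4 {α β γ η : Type*} (A : Finset α) (B : Finset β) (C : Finset γ) (D : Finset η)
    (F : α → β → γ → η → ℝ) :
    ∑ u ∈ A, ∑ v ∈ B, ∑ k ∈ C, ∑ j ∈ D, F u v k j
      = ∑ k ∈ C, ∑ j ∈ D, ∑ u ∈ A, ∑ v ∈ B, F u v k j := by
  calc ∑ u ∈ A, ∑ v ∈ B, ∑ k ∈ C, ∑ j ∈ D, F u v k j
      = ∑ u ∈ A, ∑ k ∈ C, ∑ v ∈ B, ∑ j ∈ D, F u v k j :=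
        Finset.sum_congr rfl (fun u _ => Finset.sum_comm)
    _ = ∑ k ∈ C, ∑ u ∈ A, ∑ v ∈ B, ∑ j ∈ D, F u v k j := Finset.sum_comm
    _ = ∑ k ∈ C, ∑ u ∈ A, ∑ j ∈ D, ∑ v ∈ B, F u v k j :=
        Finset.sum_congr rfl (fun k _ => Finset.sum_congr rfl (fun u _ => Finset.sum_comm))
    _ = ∑ k ∈ C, ∑ j ∈ D, ∑ u ∈ A, ∑ v ∈ B, F u v k j :=
        Finset.sum_congr rfl (fun k _ => Finset.sum_comm)

lemma numeric_core (m : ℕ) (hm : 2 ≤ m) (c : ℝ) (hc : 0 < c)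
    (lam : ℕ → ℝ) (k0 : ℕ)
    (hlam_nonneg : ∀ k, 1 ≤ k → k ≤ m → 0 ≤ lam k)
    (hlam_mono : ∀ k, 1 ≤ k → k < m → lam k ≤ lam (k + 1))
    (hk0_min : ∀ k, 1 ≤ k → k ≤ m → 0 < lam k → k0 ≤ k)
    (hsum : ∀ s, k0 ≤ s → s ≤ m → ∑ k ∈ Finset.Icc s m, (lam k)⁻¹ ≤ c * s / lam s)
    (f : ℕ → ℝ)
    (hf_mono : ∀ k, k < m → f k ≤ f (k + 1))
    (hf_ratio : ∀ k, 1 ≤ k → k < m → f (k + 1) / ((k : ℝ) + 1) ≤ f k / k)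
    (π : ℕ → ℝ) (hπ : ∀ k, 0 ≤ π k)
    (hdom : ∀ k, k ≤ m → ∑ j ∈ Finset.Icc 1 k, π j ≤ f k)
    (δ : ℝ) (hδ : 0 < δ) (hkδ : kDelta m lam δ ≤ m - 1) :
    ∑ k ∈ Finset.Icc 1 m, ∑ j ∈ Finset.Icc 1 m, wCoef lam δ k * (2 * (π k + π j))
      ≤ (4 * c + 8) * m * δ ^ 2 * f (kDelta m lam δ + 1) := by
  set K := kDelta m lam δ with hK
  clear_value K
  set s := K + 1 with hs
  clear_value s
  have hs1 : 1 ≤ s := by omega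
  have hsm : s ≤ m := by omega
  have hKm : K < m := by omega
  -- elements above K are not in the filter
  have hnotin : ∀ k, s ≤ k → k ≤ m → 0 < lam k ∧ (lam k)⁻¹ < δ ^ 2 := by
    intro k hks hkm
    have hk1 : 1 ≤ k := le_trans hs1 hks
    have : k ∉ (Finset.Icc 1 m).filter (fun k => lam k = 0 ∨ δ ^ 2 ≤ (lam k)⁻¹) := by
      intro hmem
      have hkK : k ≤ K := by
        rw [hK, kDelta]; exact Finset.le_sup (f := id) hmem
      omega
    rw [Finset.mem_filter] at this
    push_neg at this
    have h2 := this (Finset.mem_Icc.mpr ⟨hk1, hkm⟩)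
    exact ⟨lt_of_le_of_ne (hlam_nonneg k hk1 hkm) (Ne.symm h2.1), h2.2⟩
  have hlams : 0 < lam s := (hnotin s le_rfl hsm).1
  have hk0s : k0 ≤ s := hk0_min s hs1 hsm hlams
  -- monotonicity of lam on chains
  have hlam_chain : ∀ a b, 1 ≤ a → a ≤ b → b ≤ m → lam a ≤ lam b := by
    intro a b ha hab hbm
    induction b with
    | zero => omega
    | succ n ih =>
      rcases Nat.lt_or_ge a (n+1) with h | h
      · have han : a ≤ n := by omega
        exact le_trans (ih (by omega) (by omega)) (hlam_mono n (by omega) (by omega))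
      · have : a = n + 1 := by omega
        rw [this]
  -- a_k ≤ δ² and positivity on [s,m]
  have hw_le_dsq : ∀ k, wCoef lam δ k ≤ δ ^ 2 := by
    intro k; unfold wCoef; split
    · exact le_rfl
    · exact min_le_right _ _
  have hw_nonneg : ∀ k, 1 ≤ k → k ≤ m → 0 ≤ wCoef lam δ k := by
    intro k h1 h2; unfold wCoef; split
    · positivity
    · exact le_min (inv_nonneg.mpr (hlam_nonneg k h1 h2)) (by positivity)
  have hw_le_inv : ∀ k, s ≤ k → k ≤ m → wCoef lam δ k ≤ (lam k)⁻¹ := by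
    intro k h1 h2
    unfold wCoef
    rw [if_neg (ne_of_gt (hnotin k h1 h2).1)]
    exact min_le_left _ _
  -- sums S
  set S : ℕ → ℝ := fun t => ∑ j ∈ Finset.Icc 1 t, π j with hSdef
  clear_value S
  have hS_nonneg : ∀ t, 0 ≤ S t := by
    intro t; simp only [hSdef]; exact Finset.sum_nonneg (fun j _ => hπ j)
  have hS_le_f : ∀ t, t ≤ m → S t ≤ f t := by
    intro t ht; simp only [hSdef]; exact hdom t ht
  have hS_succ : ∀ n, S (n + 1) = S n + π (n + 1) := by
    intro n; simp only [hSdef]; exact Finset.sum_Icc_succ_top (by omega) _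
  have hfs_nonneg : 0 ≤ f s := le_trans (hS_nonneg s) (hS_le_f s hsm)
  -- f ratio chain (multiplied form)
  have hf_chain : ∀ t, s ≤ t → t ≤ m → f t * s ≤ f s * t := by
    intro t hst htm
    induction t with
    | zero => omega
    | succ n ih =>
      rcases Nat.lt_or_ge n s with h | h
      · have : s = n + 1 := by omega
        rw [this]
      · have hn1 : 1 ≤ n := le_trans hs1 h
        have hnm : n < m := by omega
        have hr := hf_ratio n hn1 hnm
        have hnpos : (0:ℝ) < n := by exact_mod_cast hn1
        have hstep : f (n+1) * n ≤ f n * (n + 1) := by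
          rw [div_le_div_iff₀ (by positivity) hnpos] at hr
          push_cast
          linarith
        have hihn := ih h (by omega)
        have hspos : (0:ℝ) < s := by exact_mod_cast hs1
        have : f (n+1) * s * n ≤ f s * (n+1) * n := by
          calc f (n+1) * s * n = (f (n+1) * n) * s := by ring
            _ ≤ (f n * (n+1)) * s := by
                apply mul_le_mul_of_nonneg_right hstep (le_of_lt hspos)
            _ = (f n * s) * (n+1) := by ring
            _ ≤ (f s * n) * (n+1) := by
                apply mul_le_mul_of_nonneg_right hihn (by positivity)
            _ = f s * (n+1) * n := by ring
        have hfin : f (n + 1) * (s:ℝ) ≤ f s * ((n:ℝ) + 1) := by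
          refine le_of_mul_le_mul_right ?_ hnpos
          nlinarith [this]
        have hc1 : ((n+1:ℕ):ℝ) = (n:ℝ) + 1 := by exact_mod_cast rfl
        rw [hc1]
        exact hfin
  have hsfS : ∀ t, s ≤ t → t ≤ m → (s:ℝ) * S t ≤ (t:ℝ) * f s := by
    intro t hst htm
    calc (s:ℝ) * S t ≤ (s:ℝ) * f t := by
          apply mul_le_mul_of_nonneg_left (hS_le_f t htm) (by positivity)
      _ = f t * s := by ring
      _ ≤ f s * t := hf_chain t hst htm
      _ = (t:ℝ) * f s := by ring
  -- the Abel-type induction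
  have habel : ∀ t, s ≤ t → t ≤ m →
      (s:ℝ) * (∑ k ∈ Finset.Icc s t, (lam k)⁻¹ * π k)
        + (lam t)⁻¹ * ((t:ℝ) * f s - (s:ℝ) * S t)
      ≤ f s * (((s:ℝ) - 1) * (lam s)⁻¹ + ∑ k ∈ Finset.Icc s t, (lam k)⁻¹) := by
    intro t hst htm
    induction t with
    | zero => omega
    | succ n ih =>
      rcases Nat.lt_or_ge n s with h | h
      · -- base case: s = n+1
        have hbase : n + 1 = s := by omega
        rw [hbase]
        simp only [Finset.Icc_self, Finset.sum_singleton]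
        have hπS : π s ≤ S s := by
          simp only [hSdef]
          exact Finset.single_le_sum (fun j _ => hπ j) (Finset.mem_Icc.mpr ⟨hs1, le_rfl⟩)
        have hinv : 0 ≤ (lam s)⁻¹ := le_of_lt (inv_pos.mpr hlams)
        have hspos : (0:ℝ) < s := by exact_mod_cast hs1
        nlinarith [mul_le_mul_of_nonneg_left hπS (mul_nonneg (le_of_lt hspos) hinv)]
      · -- step
        have hnm : n < m := by omega
        have hn1 : 1 ≤ n := le_trans hs1 h
        have ihn := ih h (by omega)
        have hlamn : 0 < lam n := (hnotin n h (by omega)).1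
        have hlamn1 : 0 < lam (n+1) := (hnotin (n+1) (by omega) htm).1
        have hanti : (lam (n+1))⁻¹ ≤ (lam n)⁻¹ :=
          inv_anti₀ hlamn (hlam_mono n hn1 hnm)
        have hsum_step : ∑ k ∈ Finset.Icc s (n+1), (lam k)⁻¹ * π k
            = (∑ k ∈ Finset.Icc s n, (lam k)⁻¹ * π k) + (lam (n+1))⁻¹ * π (n+1) :=
          Finset.sum_Icc_succ_top (by omega) _
        have hsum_step2 : ∑ k ∈ Finset.Icc s (n+1), (lam k)⁻¹
            = (∑ k ∈ Finset.Icc s n, (lam k)⁻¹) + (lam (n+1))⁻¹ :=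
          Finset.sum_Icc_succ_top (by omega) _
        have hSstep : S (n+1) = S n + π (n+1) := hS_succ n
        have hpos_n : (0:ℝ) ≤ (n:ℝ) * f s - (s:ℝ) * S n := by
          have := hsfS n h (by omega); linarith
        have hineq : (lam (n+1))⁻¹ * ((n:ℝ) * f s - (s:ℝ) * S n)
            ≤ (lam n)⁻¹ * ((n:ℝ) * f s - (s:ℝ) * S n) :=
          mul_le_mul_of_nonneg_right hanti hpos_n
        rw [hsum_step, hsum_step2, hSstep]
        have hc1 : ((n+1:ℕ):ℝ) = (n:ℝ) + 1 := by exact_mod_cast rfl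
        rw [hc1]
        nlinarith [ihn, hineq]
  -- sum of inverses bound
  have hinv_sum : ∑ k ∈ Finset.Icc s m, (lam k)⁻¹ ≤ c * s * (lam s)⁻¹ := by
    have := hsum s hk0s hsm
    rw [div_eq_mul_inv] at this
    exact this
  have hasd : (lam s)⁻¹ ≤ δ ^ 2 := le_of_lt (hnotin s le_rfl hsm).2
  have hinv_s_nonneg : (0:ℝ) ≤ (lam s)⁻¹ := le_of_lt (inv_pos.mpr hlams)
  -- H(m) bound
  have hHm : ∑ k ∈ Finset.Icc s m, (lam k)⁻¹ * π k ≤ (1 + c) * δ ^ 2 * f s := by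
    have h1 := habel m hsm le_rfl
    have h2 : (0:ℝ) ≤ (lam m)⁻¹ * ((m:ℝ) * f s - (s:ℝ) * S m) := by
      apply mul_nonneg (le_of_lt (inv_pos.mpr (hnotin m hsm le_rfl).1))
      have := hsfS m hsm le_rfl; linarith
    have h3 : f s * (((s:ℝ) - 1) * (lam s)⁻¹ + ∑ k ∈ Finset.Icc s m, (lam k)⁻¹)
        ≤ f s * (((s:ℝ) - 1) * (lam s)⁻¹ + c * s * (lam s)⁻¹) :=
      mul_le_mul_of_nonneg_left (by linarith [hinv_sum]) hfs_nonneg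
    have hspos : (0:ℝ) < s := by exact_mod_cast hs1
    have h4 : f s * (((s:ℝ) - 1) * (lam s)⁻¹ + c * s * (lam s)⁻¹)
        ≤ (s:ℝ) * ((1 + c) * δ ^ 2 * f s) := by
      have e1 : f s * (((s:ℝ) - 1) * (lam s)⁻¹ + c * s * (lam s)⁻¹)
          ≤ f s * (((s:ℝ)) * (lam s)⁻¹ + c * s * (lam s)⁻¹) := by
        apply mul_le_mul_of_nonneg_left _ hfs_nonneg
        nlinarith
      have e2 : f s * (((s:ℝ)) * (lam s)⁻¹ + c * s * (lam s)⁻¹)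
          = (s:ℝ) * ((1 + c) * (lam s)⁻¹ * f s) := by ring
      have e3 : (1 + c) * (lam s)⁻¹ * f s ≤ (1 + c) * δ ^ 2 * f s := by
        apply mul_le_mul_of_nonneg_right _ hfs_nonneg
        apply mul_le_mul_of_nonneg_left hasd (by linarith)
      calc f s * (((s:ℝ) - 1) * (lam s)⁻¹ + c * s * (lam s)⁻¹)
          ≤ (s:ℝ) * ((1 + c) * (lam s)⁻¹ * f s) := by rw [← e2]; exact e1
        _ ≤ (s:ℝ) * ((1 + c) * δ ^ 2 * f s) :=
            mul_le_mul_of_nonneg_left e3 (le_of_lt hspos)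
    have : (s:ℝ) * (∑ k ∈ Finset.Icc s m, (lam k)⁻¹ * π k)
        ≤ (s:ℝ) * ((1 + c) * δ ^ 2 * f s) := by linarith
    exact le_of_mul_le_mul_left this hspos
  -- splitting sums
  have hsplit : ∀ (g : ℕ → ℝ), ∑ k ∈ Finset.Icc 1 m, g k
      = (∑ k ∈ Finset.Icc 1 K, g k) + ∑ k ∈ Finset.Icc s m, g k := by
    intro g
    rw [show (1:ℕ) = 0 + 1 from rfl, Finset.Icc_add_one_left_eq_Ioc, Finset.Icc_add_one_left_eq_Ioc, hs,
      Finset.Icc_add_one_left_eq_Ioc, Finset.sum_Ioc_consecutive _ (Nat.zero_le K) (le_of_lt hKm)]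
  have hSK_le : S K ≤ f K := hS_le_f K (le_of_lt hKm)
  have hfK_le : f K ≤ f s := by rw [hs]; exact hf_mono K hKm
  -- (A)
  have hA : ∑ k ∈ Finset.Icc 1 m, wCoef lam δ k * π k ≤ (2 + c) * δ ^ 2 * f s := by
    rw [hsplit]
    have part1 : ∑ k ∈ Finset.Icc 1 K, wCoef lam δ k * π k ≤ δ ^ 2 * S K := by
      simp only [hSdef]
      rw [Finset.mul_sum]
      apply Finset.sum_le_sum
      intro k _
      exact mul_le_mul_of_nonneg_right (hw_le_dsq k) (hπ k)
    have part2 : ∑ k ∈ Finset.Icc s m, wCoef lam δ k * π k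
        ≤ ∑ k ∈ Finset.Icc s m, (lam k)⁻¹ * π k := by
      apply Finset.sum_le_sum
      intro k hk
      rw [Finset.mem_Icc] at hk
      exact mul_le_mul_of_nonneg_right (hw_le_inv k hk.1 hk.2) (hπ k)
    have e1 : δ ^ 2 * S K ≤ δ ^ 2 * f s := by
      apply mul_le_mul_of_nonneg_left (le_trans hSK_le hfK_le) (by positivity)
    linarith only [part1, part2, e1, hHm]
  -- (B)
  have hB : ∑ k ∈ Finset.Icc 1 m, wCoef lam δ k ≤ (1 + c) * s * δ ^ 2 := by
    rw [hsplit]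
    have part1 : ∑ k ∈ Finset.Icc 1 K, wCoef lam δ k ≤ (K:ℝ) * δ ^ 2 := by
      calc ∑ k ∈ Finset.Icc 1 K, wCoef lam δ k ≤ ∑ k ∈ Finset.Icc 1 K, δ ^ 2 :=
            Finset.sum_le_sum (fun k _ => hw_le_dsq k)
        _ = (K:ℝ) * δ ^ 2 := by
            rw [Finset.sum_const, Nat.card_Icc]
            simp [nsmul_eq_mul]
    have part2 : ∑ k ∈ Finset.Icc s m, wCoef lam δ k ≤ c * s * δ ^ 2 := by
      calc ∑ k ∈ Finset.Icc s m, wCoef lam δ k ≤ ∑ k ∈ Finset.Icc s m, (lam k)⁻¹ := by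
            apply Finset.sum_le_sum
            intro k hk
            rw [Finset.mem_Icc] at hk
            exact hw_le_inv k hk.1 hk.2
        _ ≤ c * s * (lam s)⁻¹ := hinv_sum
        _ ≤ c * s * δ ^ 2 := by
            apply mul_le_mul_of_nonneg_left hasd
            positivity
    have hKs : (K:ℝ) ≤ (s:ℝ) := by exact_mod_cast (by omega : K ≤ s)
    have hs0 : (0:ℝ) ≤ (s:ℝ) := by positivity
    have hKd := mul_le_mul_of_nonneg_right hKs (sq_nonneg δ)
    linarith only [part1, part2, hKd]
  -- (C)
  have hC : (s:ℝ) * S m ≤ (m:ℝ) * f s := hsfS m hsm le_rfl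
  -- rewrite LHS
  have hLHS : ∑ k ∈ Finset.Icc 1 m, ∑ j ∈ Finset.Icc 1 m, wCoef lam δ k * (2 * (π k + π j))
      = 2 * (m:ℝ) * (∑ k ∈ Finset.Icc 1 m, wCoef lam δ k * π k)
        + 2 * (∑ k ∈ Finset.Icc 1 m, wCoef lam δ k) * S m := by
    have hrow : ∀ k, ∑ j ∈ Finset.Icc 1 m, wCoef lam δ k * (2 * (π k + π j))
        = 2 * (m:ℝ) * (wCoef lam δ k * π k) + 2 * wCoef lam δ k * S m := by
      intro k
      have e : ∑ j ∈ Finset.Icc 1 m, wCoef lam δ k * (2 * (π k + π j))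
          = ∑ j ∈ Finset.Icc 1 m, (2 * (wCoef lam δ k * π k) + 2 * wCoef lam δ k * π j) := by
        apply Finset.sum_congr rfl; intro j _; ring
      rw [e, Finset.sum_add_distrib, Finset.sum_const, Nat.card_Icc, ← Finset.mul_sum]
      simp only [nsmul_eq_mul, hSdef, Nat.add_sub_cancel]
      ring
    rw [Finset.sum_congr rfl (fun k _ => hrow k), Finset.sum_add_distrib,
      ← Finset.mul_sum, ← Finset.sum_mul,
      show (∑ x ∈ Finset.Icc 1 m, 2 * wCoef lam δ x)
        = 2 * ∑ x ∈ Finset.Icc 1 m, wCoef lam δ x from (Finset.mul_sum _ _ _).symm]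
  rw [hLHS]
  have hwsum_nonneg : 0 ≤ ∑ k ∈ Finset.Icc 1 m, wCoef lam δ k := by
    apply Finset.sum_nonneg
    intro k hk
    rw [Finset.mem_Icc] at hk
    exact hw_nonneg k hk.1 hk.2
  have hm0 : (0:ℝ) ≤ (m:ℝ) := by positivity
  have hspos : (0:ℝ) < (s:ℝ) := by exact_mod_cast hs1
  have t1 : 2 * (m:ℝ) * (∑ k ∈ Finset.Icc 1 m, wCoef lam δ k * π k)
      ≤ 2 * (m:ℝ) * ((2 + c) * δ ^ 2 * f s) := by
    apply mul_le_mul_of_nonneg_left hA (by positivity)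
  have t2 : 2 * (∑ k ∈ Finset.Icc 1 m, wCoef lam δ k) * S m
      ≤ 2 * ((1 + c) * δ ^ 2) * ((m:ℝ) * f s) := by
    have hw2 : (∑ k ∈ Finset.Icc 1 m, wCoef lam δ k) * S m
        ≤ ((1 + c) * s * δ ^ 2) * S m :=
      mul_le_mul_of_nonneg_right hB (hS_nonneg m)
    have hcd : (0:ℝ) ≤ (1 + c) * δ ^ 2 :=
      mul_nonneg (by linarith) (sq_nonneg δ)
    have hw3 : ((1 + c) * δ ^ 2) * ((s:ℝ) * S m) ≤ ((1 + c) * δ ^ 2) * ((m:ℝ) * f s) :=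
      mul_le_mul_of_nonneg_left hC hcd
    linarith only [hw2, hw3]
  have hrhs : 2 * (m:ℝ) * ((2 + c) * δ ^ 2 * f s) + 2 * ((1 + c) * δ ^ 2) * ((m:ℝ) * f s)
      ≤ (4 * c + 8) * m * δ ^ 2 * f s := by
    have hmd : (0:ℝ) ≤ (m:ℝ) * δ ^ 2 * f s := by positivity
    linarith only [hmd]
  linarith only [t1, t2, hrhs]

end Aux

/-- **Weighted-norm variance bound.** Let `φ ∈ Ψ`, `δ > 0` with `k(δ) ≤ m−1`, and let
`(X,X',Y)` be a random triple with `X,X'` independent uniform on `V` and `Y ∈ {−1,1}`. Then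
`E‖Y·𝒫_L(E_{X,X'})‖_w² ≤ (4c+8) m⁻¹ δ² φ(k(δ)+1)`. -/
theorem weighted_norm_variance_bound
    {Ω : Type*} [MeasureSpace Ω] [IsProbabilityMeasure (ℙ : Measure Ω)]
    (m : ℕ) (hm : 2 ≤ m) (c : ℝ) (hc : 0 < c)
    (lam : ℕ → ℝ) (k0 : ℕ)
    (hlam_nonneg : ∀ k, 1 ≤ k → k ≤ m → 0 ≤ lam k)
    (hlam_mono : ∀ k, 1 ≤ k → k < m → lam k ≤ lam (k + 1))
    (hk0_mem : 1 ≤ k0 ∧ k0 ≤ m) (hk0_pos : 0 < lam k0)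
    (hk0_min : ∀ k, 1 ≤ k → k ≤ m → 0 < lam k → k0 ≤ k)
    (hratio : ∀ k, k0 ≤ k → k < m → ((k : ℝ) + 1) / lam (k + 1) ≤ (k : ℝ) / lam k)
    (hgap : ∀ k, k0 ≤ k → k < m → lam (k + 1) ≤ c * lam k)
    (hsum : ∀ s, k0 ≤ s → s ≤ m → ∑ k ∈ Finset.Icc s m, (lam k)⁻¹ ≤ c * s / lam s)
    (phi : ℕ → EuclideanSpace ℝ (Fin m))
    (horth : Orthonormal ℝ (fun k : Fin m => phi ((k : ℕ) + 1)))
    (L : Submodule ℝ (EuclideanSpace ℝ (Fin m)))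
    (r : ℕ) (hr : Module.finrank ℝ L = r) (hr1 : 1 ≤ r)
    (f : ℕ → ℝ)
    (hf_mono : ∀ k, k < m → f k ≤ f (k + 1))
    (hf_ratio : ∀ k, 1 ≤ k → k < m → f (k + 1) / ((k : ℝ) + 1) ≤ f k / k)
    (hf_dom : ∀ k, k ≤ m → ∑ j ∈ Finset.Icc 1 k, projNormSq L (phi j) ≤ f k)
    (δ : ℝ) (hδ : 0 < δ) (hkδ : kDelta m lam δ ≤ m - 1)
    (X X' : Ω → Fin m) (Y : Ω → ℝ)
    (hXmeas : Measurable X) (hX'meas : Measurable X') (hYmeas : Measurable Y)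
    (hindep : IndepFun X X' ℙ)
    (hXunif : Measure.map X ℙ = uniformFin m)
    (hX'unif : Measure.map X' ℙ = uniformFin m)
    (hY : ∀ᵐ ω ∂ℙ, Y ω = 1 ∨ Y ω = -1) :
    ∫ ω, wNormSq m lam δ phi (Y ω • calP L (Ematrix (X ω) (X' ω))) ∂ℙ ≤
      (4 * c + 8) * (m : ℝ)⁻¹ * δ ^ 2 * f (kDelta m lam δ + 1) := by
  classical
  -- notations
  set K := kDelta m lam δ with hK
  set g : Fin m → Fin m → ℝ :=
    fun u v => wNormSq m lam δ phi (calP L (Ematrix u v)) with hg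
  -- Step 1: remove Y by a.e. equality
  have hae : ∀ᵐ ω ∂(ℙ : Measure Ω),
      wNormSq m lam δ phi (Y ω • calP L (Ematrix (X ω) (X' ω))) = g (X ω) (X' ω) := by
    filter_upwards [hY] with ω hω
    rcases hω with h | h <;> rw [wNormSq_smul', h, hg] <;> norm_num
  rw [integral_congr_ae hae]
  -- Step 2: compute the integral as a finite sum
  have hPX : ∀ u, (ℙ : Measure Ω) (X ⁻¹' {u}) = (m : ENNReal)⁻¹ := by
    intro u
    rw [← Measure.map_apply hXmeas (measurableSet_singleton u), hXunif]
    simp [uniformFin, Measure.count_singleton]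
  have hPX' : ∀ v, (ℙ : Measure Ω) (X' ⁻¹' {v}) = (m : ENNReal)⁻¹ := by
    intro v
    rw [← Measure.map_apply hX'meas (measurableSet_singleton v), hX'unif]
    simp [uniformFin, Measure.count_singleton]
  have hinter : ∀ u v, (ℙ : Measure Ω) (X ⁻¹' {u} ∩ X' ⁻¹' {v})
      = (m : ENNReal)⁻¹ * (m : ENNReal)⁻¹ := by
    intro u v
    rw [hindep.measure_inter_preimage_eq_mul _ _ (measurableSet_singleton u)
      (measurableSet_singleton v), hPX, hPX']
  have hpt : ∀ ω, g (X ω) (X' ω)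
      = ∑ u : Fin m, ∑ v : Fin m,
          Set.indicator (X ⁻¹' {u} ∩ X' ⁻¹' {v}) (fun _ => g u v) ω := by
    intro ω
    simp only [Set.indicator_apply, Set.mem_inter_iff, Set.mem_preimage,
      Set.mem_singleton_iff, ite_and]
    rw [Finset.sum_eq_single (X ω)]
    · rw [Finset.sum_eq_single (X' ω)]
      · simp
      · intro b _ hb; simp [Ne.symm hb]
      · simp
    · intro b _ hb; rw [Finset.sum_eq_zero]; intro v _; simp [Ne.symm hb]
    · simp
  have hint : ∫ ω, g (X ω) (X' ω) ∂ℙ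
      = ∑ u : Fin m, ∑ v : Fin m, ((m:ℝ)⁻¹ * (m:ℝ)⁻¹) * g u v := by
    calc ∫ ω, g (X ω) (X' ω) ∂ℙ
        = ∫ ω, ∑ u : Fin m, ∑ v : Fin m,
            Set.indicator (X ⁻¹' {u} ∩ X' ⁻¹' {v}) (fun _ => g u v) ω ∂ℙ :=
          integral_congr_ae (Filter.Eventually.of_forall hpt)
      _ = ∑ u : Fin m, ∑ v : Fin m, ((m:ℝ)⁻¹ * (m:ℝ)⁻¹) * g u v := by
          rw [integral_finset_sum]
          · refine Finset.sum_congr rfl fun u _ => ?_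
            rw [integral_finset_sum]
            · refine Finset.sum_congr rfl fun v _ => ?_
              rw [integral_indicator_const _
                ((hXmeas (measurableSet_singleton u)).inter
                  (hX'meas (measurableSet_singleton v))), measureReal_def, hinter u v]
              simp [ENNReal.toReal_mul, ENNReal.toReal_inv, smul_eq_mul]
            · intro v _
              exact (integrable_const _).indicator
                ((hXmeas (measurableSet_singleton u)).inter
                  (hX'meas (measurableSet_singleton v)))
          · intro u _
            apply integrable_finset_sum
            intro v _
            exact (integrable_const _).indicator
              ((hXmeas (measurableSet_singleton u)).inter
                (hX'meas (measurableSet_singleton v)))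
  rw [hint]
  -- Step 3: norms of the phi's
  have hphi_norm : ∀ k, 1 ≤ k → k ≤ m → ‖phi k‖ = 1 := by
    intro k h1 h2
    have hlt : k - 1 < m := by omega
    have := horth.1 ⟨k - 1, hlt⟩
    simpa [show k - 1 + 1 = k by omega] using this
  have hw_nonneg : ∀ k, 1 ≤ k → k ≤ m → 0 ≤ wCoef lam δ k := by
    intro k h1 h2; unfold wCoef; split
    · positivity
    · exact le_min (inv_nonneg.mpr (hlam_nonneg k h1 h2)) (by positivity)
  -- Step 4: bound the double sum
  set π : ℕ → ℝ := fun k => projNormSq L (phi k) with hπdef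
  have hswap : ∑ u : Fin m, ∑ v : Fin m, g u v
      = ∑ k ∈ Finset.Icc 1 m, ∑ j ∈ Finset.Icc 1 m, wCoef lam δ k *
          ∑ u : Fin m, ∑ v : Fin m, (pairCoef (calP L (Ematrix u v)) (phi k) (phi j))^2 := by
    rw [show ∑ u : Fin m, ∑ v : Fin m, g u v
        = ∑ k ∈ Finset.Icc 1 m, ∑ j ∈ Finset.Icc 1 m, ∑ u : Fin m, ∑ v : Fin m,
            wCoef lam δ k * (pairCoef (calP L (Ematrix u v)) (phi k) (phi j))^2 from
      sum_comm4 _ _ _ _ _]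
    refine Finset.sum_congr rfl fun k _ => Finset.sum_congr rfl fun j _ => ?_
    rw [Finset.mul_sum]
    refine Finset.sum_congr rfl fun u _ => ?_
    rw [Finset.mul_sum]
  have hbound : ∑ u : Fin m, ∑ v : Fin m, g u v
      ≤ ∑ k ∈ Finset.Icc 1 m, ∑ j ∈ Finset.Icc 1 m, wCoef lam δ k * (2 * (π k + π j)) := by
    rw [hswap]
    refine Finset.sum_le_sum fun k hk => Finset.sum_le_sum fun j hj => ?_
    rw [Finset.mem_Icc] at hk hj
    apply mul_le_mul_of_nonneg_left _ (hw_nonneg k hk.1 hk.2)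
    exact lemmaE L (phi k) (phi j) (hphi_norm k hk.1 hk.2) (hphi_norm j hj.1 hj.2)
  have hcore := numeric_core m hm c hc lam k0 hlam_nonneg hlam_mono hk0_min hsum f
    hf_mono hf_ratio π (fun k => by simp only [hπdef, projNormSq]; positivity)
    (fun k hkm => hf_dom k hkm) δ hδ hkδ
  -- Step 5: combine
  have hmne : (m:ℝ) ≠ 0 := by positivity
  calc ∑ u : Fin m, ∑ v : Fin m, ((m:ℝ)⁻¹ * (m:ℝ)⁻¹) * g u v
      = ((m:ℝ)⁻¹ * (m:ℝ)⁻¹) * ∑ u : Fin m, ∑ v : Fin m, g u v := by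
        rw [Finset.mul_sum]
        refine Finset.sum_congr rfl fun u _ => ?_
        rw [Finset.mul_sum]
    _ ≤ ((m:ℝ)⁻¹ * (m:ℝ)⁻¹) * ((4 * c + 8) * m * δ ^ 2 * f (kDelta m lam δ + 1)) := by
        apply mul_le_mul_of_nonneg_left (le_trans hbound hcore) (by positivity)
    _ = (4 * c + 8) * (m : ℝ)⁻¹ * δ ^ 2 * f (kDelta m lam δ + 1) := by
        field_simp

end
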